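/- Let d ≤ −7 be a real number, and set A = e^{−π√(−d)} and D = √(−d/3). Then for every integer N ≥ 2, |1 − ζ_N| / (1 − A^{1/(DN)}) > 1, where ζ_N = e^{2πi/N}. -/

import Mathlib

lemma aux_abs_one_sub_exp (θ : ℝ) :
    ‖1 - Complex.exp (θ * Complex.I)‖ = 2 * |Real.sin (θ / 2)| := by
  have h : (1 : ℂ) - Complex.exp (θ * Complex.I)
      = Complex.ofReal (1 - Real.cos θ) + Complex.ofReal (-Real.sin θ) * Complex.I := by
    rw [Complex.exp_mul_I]
    push_cast [← Complex.ofReal_cos, ← Complex.ofReal_sin]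
    ring
  rw [h, Complex.norm_add_mul_I]
  have hs : Real.sin (θ / 2) ^ 2 = (1 - Real.cos θ) / 2 := by
    have h1 := Real.abs_sin_half θ
    have h2 : (0:ℝ) ≤ (1 - Real.cos θ) / 2 := by nlinarith [Real.cos_le_one θ]
    rw [← sq_abs, h1, Real.sq_sqrt h2]
  have h1 : Real.sin θ ^ 2 + Real.cos θ ^ 2 = 1 := Real.sin_sq_add_cos_sq _
  have : (1 - Real.cos θ) ^ 2 + (-Real.sin θ) ^ 2 = (2 * |Real.sin (θ / 2)|) ^ 2 := by
    rw [mul_pow, sq_abs, hs]; nlinarith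
  rw [this, Real.sqrt_sq (by positivity)]

set_option maxHeartbeats 1000000 in
/-- For `d ≤ -7`, `A = e^{-π√(-d)}`, `D = √(-d/3)` and any integer `N ≥ 2`,
`|1 - ζ_N| / (1 - A^{1/(DN)}) > 1` where `ζ_N = e^{2πi/N}`. -/
theorem abs_one_sub_zeta_div_gt_one (d : ℝ) (hd : d ≤ -7) (N : ℕ) (hN : 2 ≤ N) :
    ‖1 - Complex.exp (2 * Real.pi * Complex.I / (N : ℂ))‖ /
        (1 - Real.exp (-Real.pi * Real.sqrt (-d)) ^ (1 / (Real.sqrt (-d / 3) * (N : ℝ)))) > 1 := by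
  have hN0 : (0 : ℝ) < (N : ℝ) := by positivity
  have hNne : (N : ℂ) ≠ 0 := by exact_mod_cast Nat.cast_ne_zero.mpr (by omega)
  have hpi := Real.pi_pos
  -- rewrite the numerator
  have hnum : ‖1 - Complex.exp (2 * Real.pi * Complex.I / (N : ℂ))‖
      = 2 * Real.sin (Real.pi / N) := by
    have harg : 2 * (Real.pi : ℂ) * Complex.I / (N : ℂ)
        = ((2 * Real.pi / N : ℝ) : ℂ) * Complex.I := by
      push_cast
      field_simp
    rw [harg, aux_abs_one_sub_exp]
    have : 2 * Real.pi / (N : ℝ) / 2 = Real.pi / N := by ring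
    rw [this]
    have hpos : 0 < Real.sin (Real.pi / N) := by
      apply Real.sin_pos_of_pos_of_lt_pi (by positivity)
      calc Real.pi / N ≤ Real.pi / 2 := by
            apply div_le_div_of_nonneg_left hpi.le (by norm_num) (by exact_mod_cast hN)
        _ < Real.pi := by linarith
    rw [abs_of_pos hpos]
  -- rewrite the denominator exponent
  have hd0 : (0:ℝ) < -d := by linarith
  have ht : 0 < Real.sqrt (-d / 3) := Real.sqrt_pos.mpr (by linarith)
  have hst : Real.sqrt (-d) = Real.sqrt 3 * Real.sqrt (-d / 3) := by
    rw [← Real.sqrt_mul (by norm_num : (0:ℝ) ≤ 3)]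
    congr 1
    ring
  have hden : Real.exp (-Real.pi * Real.sqrt (-d)) ^ (1 / (Real.sqrt (-d / 3) * (N : ℝ)))
      = Real.exp (-(Real.sqrt 3 * Real.pi / N)) := by
    rw [← Real.exp_log (Real.exp_pos _) , Real.log_exp] at *
    rw [Real.rpow_def_of_pos (Real.exp_pos _), Real.log_exp, hst]
    congr 1
    field_simp
    rw [div_self (by rw [← neg_div]; exact ht.ne')]
  rw [hnum, hden]
  set x : ℝ := Real.pi / N with hx
  have hx0 : 0 < x := by positivity
  have hsx : Real.sqrt 3 * Real.pi / N = Real.sqrt 3 * x := by rw [hx]; ring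
  rw [hsx]
  have hsq3 : Real.sqrt 3 ^ 2 = 3 := Real.sq_sqrt (by norm_num)
  have hsq3nn : 0 ≤ Real.sqrt 3 := Real.sqrt_nonneg 3
  have hexp_pos : 0 < Real.exp (-(Real.sqrt 3 * x)) := Real.exp_pos _
  have hexp_lt : Real.exp (-(Real.sqrt 3 * x)) < 1 := by
    rw [Real.exp_lt_one_iff]
    nlinarith
  rw [gt_iff_lt, lt_div_iff₀ (by linarith)]
  rw [one_mul]
  -- now need : 1 - exp(-(√3 x)) < 2 sin x
  have key : 1 - Real.exp (-(Real.sqrt 3 * x)) < Real.sqrt 3 * x := by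
    have := Real.add_one_lt_exp (x := -(Real.sqrt 3 * x)) (by nlinarith)
    linarith
  by_cases h5 : 5 ≤ N
  · -- x ≤ π/5 < 1
    have hxle : x ≤ Real.pi / 5 := by
      rw [hx]
      apply div_le_div_of_nonneg_left hpi.le (by norm_num) (by exact_mod_cast h5)
    have hpi_lt : Real.pi < 3.15 := by
      have := Real.pi_lt_d2; linarith
    have hx1 : x ≤ 1 := by nlinarith
    have hsin : x - x ^ 3 / 4 < Real.sin x := by
      have := Real.sin_gt_sub_cube hx0; nlinarith [pow_pos hx0 3]
    have h3lt : Real.sqrt 3 < 1.74 := by nlinarith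
    have h63 : x ≤ 0.63 := by nlinarith
    have h2 : Real.sqrt 3 * x ≤ 2 * (x - x ^ 3 / 4) := by nlinarith [mul_pos hx0 hx0]
    nlinarith
  · -- N ∈ {2,3,4} : 2 sin(π/N) ≥ √2 ≥ 1
    have h4 : (N : ℝ) ≤ 4 := by exact_mod_cast (by omega : N ≤ 4)
    have hxge : Real.pi / 4 ≤ x := by
      rw [hx]; exact div_le_div_of_nonneg_left hpi.le hN0 h4
    have hxle2 : x ≤ Real.pi / 2 := by
      rw [hx]
      exact div_le_div_of_nonneg_left hpi.le (by norm_num) (by exact_mod_cast hN)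
    have hmono : Real.sin (Real.pi / 4) ≤ Real.sin x :=
      Real.sin_le_sin_of_le_of_le_pi_div_two (by linarith) hxle2 hxge
    rw [Real.sin_pi_div_four] at hmono
    have hsq2 : Real.sqrt 2 ^ 2 = 2 := Real.sq_sqrt (by norm_num)
    have : (1:ℝ) ≤ Real.sqrt 2 := by nlinarith [Real.sqrt_nonneg 2]
    linarith
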